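/- (Cauchy determinant) For x₁,…,xₙ and y₁,…,yₙ in a field with xᵢyⱼ ≠ 1 for all i,j, det(1/(1-xᵢyⱼ))_{1≤i,j≤n} = ∏_{1≤i<j≤n}(xᵢ-xⱼ)(yᵢ-yⱼ) / ∏_{i,j=1}^n (1-xᵢyⱼ). -/

import Mathlib

open Finset Matrix

private lemma pair_split {K : Type*} [CommMonoid K] (n : ℕ) (f : Fin (n + 1) → Fin (n + 1) → K) :
    (∏ p ∈ Finset.univ.filter (fun p : Fin (n + 1) × Fin (n + 1) => p.1 < p.2), f p.1 p.2) =
      (∏ p ∈ Finset.univ.filter (fun p : Fin n × Fin n => p.1 < p.2),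
          f p.1.castSucc p.2.castSucc) *
        ∏ i : Fin n, f i.castSucc (Fin.last n) := by
  rw [Finset.prod_filter, Finset.prod_filter, Fintype.prod_prod_type, Fintype.prod_prod_type]
  rw [Fin.prod_univ_castSucc
    (f := fun i : Fin (n + 1) => ∏ j : Fin (n + 1), if i < j then f i j else 1)]
  have hlast : (∏ j : Fin (n + 1), if Fin.last n < j then f (Fin.last n) j else 1) = 1 := by
    apply Finset.prod_eq_one
    intro j _
    rw [if_neg (not_lt_of_ge (Fin.le_last j))]
  rw [hlast, mul_one]
  rw [← Finset.prod_mul_distrib]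
  apply Finset.prod_congr rfl
  intro i _
  rw [Fin.prod_univ_castSucc
    (f := fun j : Fin (n + 1) => if i.castSucc < j then f i.castSucc j else 1)]
  rw [if_pos (Fin.castSucc_lt_last i)]
  simp [Fin.castSucc_lt_castSucc_iff]

/-- the Cauchy determinant with kernel `1/(1-xy)`. -/
theorem stmt4 (n : ℕ) {K : Type*} [Field K] (x y : Fin n → K)
    (h : ∀ i j, 1 - x i * y j ≠ 0) :
    Matrix.det (Matrix.of fun i j : Fin n => 1 / (1 - x i * y j)) =
      (∏ p ∈ Finset.univ.filter (fun p : Fin n × Fin n => p.1 < p.2),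
          (x p.1 - x p.2) * (y p.1 - y p.2)) /
        ∏ i, ∏ j, (1 - x i * y j) := by
  induction n with
  | zero => simp
  | succ n ih =>
    set L := Fin.last n with hL
    set xL := x L with hxL
    set yL := y L with hyL
    -- the matrices
    set A : Matrix (Fin (n + 1)) (Fin (n + 1)) K :=
      Matrix.of fun i j => 1 / (1 - x i * y j) with hA
    set C : Matrix (Fin (n + 1)) (Fin (n + 1)) K :=
      Matrix.of fun i j => if i = L then 1 else y j / (1 - x i * y j) with hC
    set C' : Matrix (Fin (n + 1)) (Fin (n + 1)) K :=
      Matrix.of fun i j => if j = L then C i j else C i j - C i L with hC'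
    set D : Matrix (Fin n) (Fin n) K :=
      Matrix.of fun i j => 1 / (1 - x i.castSucc * y j.castSucc) with hD
    have hcast : ∀ i : Fin n, i.castSucc ≠ L := fun i => (Fin.castSucc_lt_last i).ne
    -- step 1: subtract last row
    have h1 : A.det = ((∏ j, 1 / (1 - xL * y j)) *
        ((∏ i : Fin n, (x i.castSucc - xL)) * C.det)) := by
      set A' : Matrix (Fin (n + 1)) (Fin (n + 1)) K :=
        Matrix.of fun i j => if i = L then A i j else A i j - A L j with hA'
      have e1 : A.det = A'.det := by
        apply Matrix.det_eq_of_forall_row_eq_smul_add_const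
          (fun i => if i = L then 0 else 1) L (by simp)
        intro i j
        by_cases hi : i = L <;> simp [hA', hi]
      set u : Fin (n + 1) → K := fun i => if i = L then 1 else x i - xL with hu
      have e2 : A' = Matrix.of fun i j =>
          (1 / (1 - xL * y j)) * ((Matrix.of fun i j => u i * C i j) i j) := by
        ext i j
        by_cases hi : i = L
        · simp [hA', hi, hu, hA, hC, hxL]
        · have h0 := h i j
          have h1 := h L j
          have h1' : 1 - y j * x L ≠ 0 := by rwa [mul_comm]
          simp only [hA', hA, hC, hu, hxL, Matrix.of_apply, if_neg hi]
          field_simp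
          ring
      have e3 : (∏ i, u i) = ∏ i : Fin n, (x i.castSucc - xL) := by
        rw [Fin.prod_univ_castSucc]
        simp [hu, fun i : Fin n => hcast i, hL]
      rw [e1, e2, Matrix.det_mul_row, Matrix.det_mul_column, e3]
    -- step 2: subtract last column
    have h2 : C.det = C'.det := by
      rw [← Matrix.det_transpose C, ← Matrix.det_transpose C']
      apply Matrix.det_eq_of_forall_row_eq_smul_add_const
        (fun j => if j = L then 0 else 1) L (by simp)
      intro j i
      by_cases hj : j = L <;> simp [hC', hj, Matrix.transpose_apply]
    -- step 3: Laplace expansion along the last row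
    have h3 : C'.det = ((∏ j : Fin n, (y j.castSucc - yL)) *
        ((∏ i : Fin n, 1 / (1 - x i.castSucc * yL)) * D.det)) := by
      rw [Matrix.det_succ_row C' L]
      rw [Finset.sum_eq_single L]
      · have hCL : C' L L = 1 := by simp [hC', hC]
        have hpow : ((-1 : K)) ^ ((L : ℕ) + (L : ℕ)) = 1 := by
          simp [hL, Fin.val_last, ← two_mul, pow_mul]
        rw [hCL, hpow]
        simp only [one_mul, mul_one, hL, Fin.succAbove_last]
        have e4 : C'.submatrix Fin.castSucc Fin.castSucc = Matrix.of fun i j : Fin n =>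
            (y j.castSucc - yL) * ((Matrix.of fun i j : Fin n =>
              (1 / (1 - x i.castSucc * yL)) * D i j) i j) := by
          ext i j
          have h0 := h i.castSucc j.castSucc
          have h1 := h i.castSucc L
          have h0' : 1 - y j.castSucc * x i.castSucc ≠ 0 := by rwa [mul_comm]
          simp only [Matrix.submatrix_apply, hC', hC, hD, hyL, Matrix.of_apply,
            if_neg (hcast j), if_neg (hcast i), if_pos rfl]
          field_simp
          ring
        rw [e4, Matrix.det_mul_row, Matrix.det_mul_column]
      · intro j _ hj
        have : C' L j = 0 := by simp [hC', hC, if_neg hj]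
        simp [this]
      · simp
    rw [h1, h2, h3, ih (fun i => x i.castSucc) (fun j => y j.castSucc)
      (fun i j => h i.castSucc j.castSucc)]
    -- final algebra
    rw [pair_split n (fun i j => (x i - x j) * (y i - y j))]
    rw [Fin.prod_univ_castSucc (f := fun i : Fin (n + 1) => ∏ j, (1 - x i * y j))]
    have e5 : ∀ i : Fin n, (∏ j : Fin (n + 1), (1 - x i.castSucc * y j)) =
        (∏ j : Fin n, (1 - x i.castSucc * y j.castSucc)) * (1 - x i.castSucc * yL) := by
      intro i
      rw [Fin.prod_univ_castSucc]
    have e6 : (∏ i : Fin n, ∏ j : Fin (n + 1), (1 - x i.castSucc * y j)) =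
        (∏ i : Fin n, ∏ j : Fin n, (1 - x i.castSucc * y j.castSucc)) *
          ∏ i : Fin n, (1 - x i.castSucc * yL) := by
      rw [Finset.prod_congr rfl (fun i _ => e5 i), Finset.prod_mul_distrib]
    rw [e6]
    have ha : (∏ j : Fin (n + 1), (1 - xL * y j)) ≠ 0 :=
      Finset.prod_ne_zero_iff.mpr fun j _ => h L j
    have hb : (∏ i : Fin n, (1 - x i.castSucc * yL)) ≠ 0 :=
      Finset.prod_ne_zero_iff.mpr fun i _ => h i.castSucc L
    have hc : (∏ i : Fin n, ∏ j : Fin n, (1 - x i.castSucc * y j.castSucc)) ≠ 0 :=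
      Finset.prod_ne_zero_iff.mpr fun i _ =>
        Finset.prod_ne_zero_iff.mpr fun j _ => h i.castSucc j.castSucc
    simp only [one_div, Finset.prod_inv_distrib]
    field_simp
    simp only [← hL, ← hxL, ← hyL]
    have hb2 : (∏ i : Fin n, (1 - yL * x i.castSucc)) ≠ 0 :=
      Finset.prod_ne_zero_iff.mpr fun i _ => by rw [mul_comm]; exact h i.castSucc L
    rw [div_eq_div_iff hb2 (mul_ne_zero hb2 ha)]
    rw [show (∏ i : Fin n, (x i.castSucc - xL) * (y i.castSucc - yL)) =
      (∏ i : Fin n, (x i.castSucc - xL)) * ∏ i : Fin n, (y i.castSucc - yL) from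
      Finset.prod_mul_distrib]
    ring
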